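/- For all v ∈ [0,1] and all t ∈ [0,1], the Hashin–Shtrikman correction is nonnegative: q(t;v) ≥ 0. Equivalently, the Hashin–Shtrikman upper-bound function satisfies f^HS(t;v) ≤ (κ⁻ + v·Δκ)·t² + (μ⁻ + v·Δμ)·(1 − t²), i.e. it never exceeds the Voigt energy. -/
import Mathlib


open Real

/-- The square root `s = √(1 - t²)`. -/
noncomputable def sHS (t : ℝ) : ℝ := Real.sqrt (1 - t ^ 2)

/-- The Hashin–Shtrikman correction term `q(t; v)` for two well-ordered isotropic
plane-stress phases with bulk moduli `κm < κp` and shear moduli `μm < μp`. -/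
noncomputable def qHS (κm κp μm μp t v : ℝ) : ℝ :=
  if v * (κp - κm) * t ≤ (κp + μp - (κp - κm) * v) * sHS t ∧
     v * (μp - μm) * sHS t ≤ (κp + μp - (μp - μm) * v) * t then
    v * (1 - v) * ((κp - κm) * t - (μp - μm) * sHS t) ^ 2 /
      (κp + μp - ((κp - κm) + (μp - μm)) * v)
  else if (κp + μp - (κp - κm) * v) * sHS t < v * (κp - κm) * t then
    (1 - v) * (v * (κp - κm) ^ 2 * t ^ 2 / (κp + μp - (κp - κm) * v)
      - (μp - μm) * (sHS t) ^ 2)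
  else
    (1 - v) * (v * (μp - μm) ^ 2 * (sHS t) ^ 2 / (κp + μp - (μp - μm) * v)
      - (κp - κm) * t ^ 2)

/-- The Hashin–Shtrikman upper-bound function `f^HS(t; v)`:
the Voigt energy minus the correction `q(t; v)`. -/
noncomputable def fHS (κm κp μm μp t v : ℝ) : ℝ :=
  (κm + v * (κp - κm)) * t ^ 2 + (μm + v * (μp - μm)) * (1 - t ^ 2)
    - qHS κm κp μm μp t v

/-- For all `v ∈ [0,1]` and `t ∈ [0,1]`, the Hashin–Shtrikman correction is
nonnegative, `q(t;v) ≥ 0`; equivalently `f^HS(t;v)` never exceeds the Voigt energy. -/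
theorem hs_correction_nonneg
    (κm κp μm μp : ℝ) (hκm : 0 < κm) (hκ : κm < κp) (hμm : 0 < μm) (hμ : μm < μp)
    (v : ℝ) (hv : v ∈ Set.Icc (0 : ℝ) 1) (t : ℝ) (ht : t ∈ Set.Icc (0 : ℝ) 1) :
    0 ≤ qHS κm κp μm μp t v ∧
      fHS κm κp μm μp t v ≤
        (κm + v * (κp - κm)) * t ^ 2 + (μm + v * (μp - μm)) * (1 - t ^ 2) := by
  obtain ⟨hv0, hv1⟩ := hv
  obtain ⟨ht0, ht1⟩ := ht
  have hs0 : 0 ≤ sHS t := Real.sqrt_nonneg _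
  have h1t : 0 ≤ 1 - t ^ 2 := by nlinarith
  have hs2 : sHS t ^ 2 = 1 - t ^ 2 := Real.sq_sqrt h1t
  have hd2 : 0 < κp + μp - (κp - κm) * v := by nlinarith
  have hd3 : 0 < κp + μp - (μp - μm) * v := by nlinarith
  have hd1 : 0 < κp + μp - ((κp - κm) + (μp - μm)) * v := by nlinarith
  have hq : 0 ≤ qHS κm κp μm μp t v := by
    unfold qHS
    split_ifs with h1 h2
    · apply div_nonneg _ hd1.le
      exact mul_nonneg (mul_nonneg hv0 (by linarith)) (sq_nonneg _)
    · apply mul_nonneg (by linarith)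
      rw [sub_nonneg, le_div_iff₀ hd2]
      have hsq := mul_self_lt_mul_self (mul_nonneg hd2.le hs0) h2
      have hμv : (μp - μm) * v ≤ κp + μp - (κp - κm) * v := by nlinarith
      nlinarith [sq_nonneg (v * (κp - κm) * t), mul_nonneg (mul_nonneg hv0 (sq_nonneg (κp - κm))) (sq_nonneg t), mul_lt_mul_of_pos_left hsq (by linarith : (0:ℝ) < μp - μm)]
    · have hA : v * (κp - κm) * t ≤ (κp + μp - (κp - κm) * v) * sHS t := not_lt.mp h2
      have hB : (κp + μp - (μp - μm) * v) * t < v * (μp - μm) * sHS t := by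
        rcases not_and_or.mp h1 with hA' | hB'
        · exact absurd hA hA'
        · exact not_le.mp hB'
      apply mul_nonneg (by linarith)
      rw [sub_nonneg, le_div_iff₀ hd3]
      have hsq := mul_self_lt_mul_self (mul_nonneg hd3.le ht0) hB
      have hκv : (κp - κm) * v ≤ κp + μp - (μp - μm) * v := by nlinarith
      nlinarith [sq_nonneg (v * (μp - μm) * sHS t), mul_nonneg (mul_nonneg hv0 (sq_nonneg (μp - μm))) (sq_nonneg (sHS t)), mul_lt_mul_of_pos_left hsq (by linarith : (0:ℝ) < κp - κm)]
  refine ⟨hq, ?_⟩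
  unfold fHS
  linarith
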